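/- For the skew-normal family, the perturbation measure has the closed form M_TV(λ) = arctan(λ)/π for every λ ∈ ℝ; that is, sign(λ) · (1/2) ∫_ℝ |2 Φ(λ x) − 1| φ(x) dx = arctan(λ)/π, where φ(x) = e^{−x²/2}/√(2π) and Φ(t) = ∫_{−∞}^t φ(u) du. -/

import Mathlib

open MeasureTheory Real

/-- The standard normal density. -/
noncomputable def stdNormalPdf (x : ℝ) : ℝ := Real.exp (-x ^ 2 / 2) / Real.sqrt (2 * Real.pi)

/-- The standard normal cumulative distribution function. -/
noncomputable def stdNormalCdf (t : ℝ) : ℝ := ∫ u in Set.Iic t, stdNormalPdf u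

open Set

lemma pdf_eq (x : ℝ) : stdNormalPdf x = (Real.sqrt (2 * Real.pi))⁻¹ * Real.exp (-(1/2) * x ^ 2) := by
  unfold stdNormalPdf; rw [div_eq_inv_mul]; ring_nf

lemma pdf_nonneg (x : ℝ) : 0 ≤ stdNormalPdf x :=
  div_nonneg (Real.exp_nonneg _) (Real.sqrt_nonneg _)

lemma pdf_pos (x : ℝ) : 0 < stdNormalPdf x :=
  div_pos (Real.exp_pos _) (Real.sqrt_pos.2 (by positivity))

lemma sqrt_two_pi_pos : (0:ℝ) < Real.sqrt (2 * Real.pi) := Real.sqrt_pos.2 (by positivity)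

lemma pdf_le (x : ℝ) : stdNormalPdf x ≤ (Real.sqrt (2 * Real.pi))⁻¹ := by
  rw [pdf_eq, mul_comm]
  apply mul_le_of_le_one_left (by positivity)
  exact Real.exp_le_one_iff.2 (by nlinarith [sq_nonneg x])

lemma pdf_cont : Continuous stdNormalPdf := by
  unfold stdNormalPdf; fun_prop

lemma pdf_even (x : ℝ) : stdNormalPdf (-x) = stdNormalPdf x := by
  unfold stdNormalPdf; ring_nf

lemma pdf_integrable : Integrable stdNormalPdf := by
  have h := (integrable_exp_neg_mul_sq (b := 1/2) (by norm_num)).const_mul (Real.sqrt (2 * Real.pi))⁻¹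
  refine h.congr (Filter.Eventually.of_forall fun x => ?_)
  rw [pdf_eq]

lemma pdf_integral : ∫ x, stdNormalPdf x = 1 := by
  have h : ∫ x, stdNormalPdf x = (Real.sqrt (2 * Real.pi))⁻¹ * ∫ x : ℝ, Real.exp (-(1/2) * x ^ 2) := by
    rw [← integral_const_mul]; exact integral_congr_ae (Filter.Eventually.of_forall fun x => pdf_eq x)
  rw [h, integral_gaussian]
  rw [inv_mul_eq_one₀ sqrt_two_pi_pos.ne']
  rw [show π / (1/2) = 2 * π by ring]

lemma cdf_eq (t : ℝ) : stdNormalCdf t = stdNormalCdf 0 + ∫ u in (0:ℝ)..t, stdNormalPdf u := by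
  have h := intervalIntegral.integral_Iic_sub_Iic (f := stdNormalPdf) (μ := volume)
    pdf_integrable.integrableOn pdf_integrable.integrableOn (a := 0) (b := t)
  unfold stdNormalCdf
  linarith [h]

lemma cdf_hasDerivAt (t : ℝ) : HasDerivAt stdNormalCdf (stdNormalPdf t) t := by
  have h : HasDerivAt (fun u => ∫ x in (0:ℝ)..u, stdNormalPdf x) (stdNormalPdf t) t := by
    apply intervalIntegral.integral_hasDerivAt_right
      (pdf_integrable.intervalIntegrable) (pdf_cont.stronglyMeasurableAtFilter _ _)
      pdf_cont.continuousAt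
  have := h.const_add (stdNormalCdf 0)
  refine this.congr_of_eventuallyEq (Filter.Eventually.of_forall fun u => (cdf_eq u))

lemma cdf_cont : Continuous stdNormalCdf :=
  continuous_iff_continuousAt.2 fun t => (cdf_hasDerivAt t).continuousAt

lemma cdf_nonneg (t : ℝ) : 0 ≤ stdNormalCdf t :=
  setIntegral_nonneg measurableSet_Iic fun x _ => pdf_nonneg x

lemma cdf_le_one (t : ℝ) : stdNormalCdf t ≤ 1 := by
  rw [← pdf_integral]
  exact setIntegral_le_integral pdf_integrable (Filter.Eventually.of_forall pdf_nonneg)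

lemma cdf_neg (t : ℝ) : stdNormalCdf (-t) = 1 - stdNormalCdf t := by
  have h1 : stdNormalCdf (-t) = ∫ u in Ioi t, stdNormalPdf u := by
    unfold stdNormalCdf
    have := integral_comp_neg_Iic (-t) stdNormalPdf
    rw [neg_neg] at this
    rw [← this]
    exact integral_congr_ae (Filter.Eventually.of_forall fun x => (pdf_even x).symm)
  have h2 : stdNormalCdf t + ∫ u in Ioi t, stdNormalPdf u = 1 := by
    rw [← pdf_integral]
    exact intervalIntegral.integral_Iic_add_Ioi pdf_integrable.integrableOn pdf_integrable.integrableOn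
  rw [h1]
  linarith

lemma cdf_zero : stdNormalCdf 0 = 1/2 := by
  have := cdf_neg 0; rw [neg_zero] at this; linarith

lemma cdf_mono : Monotone stdNormalCdf := fun a b hab => by
  apply setIntegral_mono_set pdf_integrable.integrableOn
    (Filter.Eventually.of_forall pdf_nonneg)
  exact HasSubset.Subset.eventuallyLE (Iic_subset_Iic.2 hab)

lemma abs_two_cdf_sub_one_le (t : ℝ) : |2 * stdNormalCdf t - 1| ≤ 1 := by
  rw [abs_le]; constructor <;> nlinarith [cdf_nonneg t, cdf_le_one t]

lemma abs_two_cdf_neg (t : ℝ) : |2 * stdNormalCdf (-t) - 1| = |2 * stdNormalCdf t - 1| := by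
  rw [cdf_neg]; rw [show 2 * (1 - stdNormalCdf t) - 1 = -(2 * stdNormalCdf t - 1) by ring, abs_neg]

lemma integral_x_exp {c : ℝ} (hc : 0 < c) :
    ∫ x in Ioi (0:ℝ), x * Real.exp (-c * x^2) = 1/(2*c) := by
  have hderiv : ∀ x ∈ Ici (0:ℝ),
      HasDerivAt (fun x => -Real.exp (-c*x^2)/(2*c)) (x * Real.exp (-c*x^2)) x := by
    intro x _
    have h1 : HasDerivAt (fun x : ℝ => -c*x^2) (-c*(2*x)) x := by
      simpa using ((hasDerivAt_pow 2 x).const_mul (-c))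
    have h2 : HasDerivAt (fun x => -Real.exp (-c*x^2)/(2*c)) _ x := (h1.exp).neg.div_const (2*c)
    convert h2 using 1
    have hc' : c ≠ 0 := hc.ne'
    field_simp
  have hint : IntegrableOn (fun x => x * Real.exp (-c*x^2)) (Ioi 0) :=
    (integrable_mul_exp_neg_mul_sq hc).integrableOn
  have hx2 : Filter.Tendsto (fun x : ℝ => x^2) Filter.atTop Filter.atTop :=
    Filter.tendsto_pow_atTop two_ne_zero
  have hcm : Filter.Tendsto (fun x : ℝ => -c*x^2) Filter.atTop Filter.atBot := by
    have := hx2.const_mul_atTop hc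
    have h3 := Filter.tendsto_neg_atTop_atBot.comp this
    refine h3.congr fun x => by simp [neg_mul]
  have htend : Filter.Tendsto (fun x : ℝ => -Real.exp (-c*x^2)/(2*c))
      Filter.atTop (nhds 0) := by
    have := (Real.tendsto_exp_atBot.comp hcm).neg.div_const (2*c)
    simpa using this
  have := integral_Ioi_of_hasDerivAt_of_tendsto' hderiv hint htend
  rw [this]
  have : (0:ℝ) < 2*c := by linarith
  field_simp
  simp

lemma integral_deriv_aux (l : ℝ) :
    ∫ x in Ioi (0:ℝ), (2 * x * stdNormalPdf (l*x)) * stdNormalPdf x = 1/(π*(1+l^2)) := by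
  have hc : 0 < (1+l^2)/2 := by positivity
  have heq : ∀ x : ℝ, (2 * x * stdNormalPdf (l*x)) * stdNormalPdf x
      = (1/π) * (x * Real.exp (-((1+l^2)/2) * x^2)) := by
    intro x
    rw [pdf_eq, pdf_eq]
    have h2 : Real.sqrt (2*π) * Real.sqrt (2*π) = 2*π :=
      Real.mul_self_sqrt (by positivity)
    have h3 : (-(1/2) * (l*x)^2) + (-(1/2) * x^2) = -((1+l^2)/2) * x^2 := by ring
    rw [show (2*x*((Real.sqrt (2*π))⁻¹ * Real.exp (-(1/2)*(l*x)^2))) *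
        ((Real.sqrt (2*π))⁻¹ * Real.exp (-(1/2)*x^2))
        = (2 * ((Real.sqrt (2*π))⁻¹*(Real.sqrt (2*π))⁻¹)) *
          (x * (Real.exp (-(1/2)*(l*x)^2) * Real.exp (-(1/2)*x^2))) from by ring,
      ← Real.exp_add, h3, ← mul_inv, h2]
    have hπ : (0:ℝ) < π := pi_pos
    field_simp
  calc ∫ x in Ioi (0:ℝ), (2 * x * stdNormalPdf (l*x)) * stdNormalPdf x
      = ∫ x in Ioi (0:ℝ), (1/π) * (x * Real.exp (-((1+l^2)/2) * x^2)) := by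
        exact integral_congr_ae (Filter.Eventually.of_forall fun x => heq x)
    _ = (1/π) * ∫ x in Ioi (0:ℝ), x * Real.exp (-((1+l^2)/2) * x^2) := integral_const_mul _ _
    _ = (1/π) * (1/(2*((1+l^2)/2))) := by rw [integral_x_exp hc]
    _ = 1/(π*(1+l^2)) := by
        have hπ : (0:ℝ) < π := pi_pos
        have : (0:ℝ) < 1 + l^2 := by positivity
        field_simp

noncomputable def Hfun (a : ℝ) : ℝ := ∫ x in Ioi (0:ℝ), (2 * stdNormalCdf (a*x) - 1) * stdNormalPdf x

lemma contF (a : ℝ) : Continuous fun x => (2 * stdNormalCdf (a*x) - 1) * stdNormalPdf x :=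
  ((continuous_const.mul (cdf_cont.comp (continuous_const.mul continuous_id))).sub
    continuous_const).mul pdf_cont

lemma intF (a : ℝ) :
    Integrable (fun x => (2 * stdNormalCdf (a*x) - 1) * stdNormalPdf x)
      (volume.restrict (Ioi 0)) := by
  refine Integrable.mono (pdf_integrable.restrict)
    (contF a).aestronglyMeasurable.restrict
    (Filter.Eventually.of_forall fun x => ?_)
  rw [norm_mul, Real.norm_eq_abs, Real.norm_eq_abs, abs_of_nonneg (pdf_nonneg x)]
  exact mul_le_of_le_one_left (pdf_nonneg x) (abs_two_cdf_sub_one_le _)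

lemma Hfun_hasDerivAt (l : ℝ) : HasDerivAt Hfun (1/(π*(1+l^2))) l := by
  have key := hasDerivAt_integral_of_dominated_loc_of_deriv_le
    (μ := volume.restrict (Ioi (0:ℝ))) (x₀ := l)
    (F := fun a x => (2 * stdNormalCdf (a*x) - 1) * stdNormalPdf x)
    (F' := fun a x => (2 * x * stdNormalPdf (a*x)) * stdNormalPdf x)
    (bound := fun x => (2 * (Real.sqrt (2*π))⁻¹) * (|x| * stdNormalPdf x))
    (s := Metric.ball l 1) (Metric.ball_mem_nhds l one_pos)
    (Filter.Eventually.of_forall fun a => (contF a).aestronglyMeasurable.restrict)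
    (intF l)
    ((((continuous_const.mul continuous_id).mul
      (pdf_cont.comp (continuous_const.mul continuous_id))).mul
      pdf_cont).aestronglyMeasurable.restrict)
    (Filter.Eventually.of_forall fun x => fun a _ => by
      rw [Real.norm_eq_abs, abs_mul, abs_mul,
        abs_of_nonneg (pdf_nonneg (a*x)), abs_of_nonneg (pdf_nonneg x)]
      have h1 : |2 * x| * stdNormalPdf (a*x) ≤ (2 * |x|) * (Real.sqrt (2*π))⁻¹ := by
        rw [abs_mul, abs_two]
        exact mul_le_mul_of_nonneg_left (pdf_le _) (by positivity)
      calc |2 * x| * stdNormalPdf (a*x) * stdNormalPdf x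
          ≤ (2 * |x|) * (Real.sqrt (2*π))⁻¹ * stdNormalPdf x :=
            mul_le_mul_of_nonneg_right h1 (pdf_nonneg x)
        _ = (2 * (Real.sqrt (2*π))⁻¹) * (|x| * stdNormalPdf x) := by ring)
    (by
      have h0 : Integrable (fun x : ℝ => |x| * stdNormalPdf x) := by
        have h1 : Integrable (fun x : ℝ => x * stdNormalPdf x) := by
          have h2 := (integrable_mul_exp_neg_mul_sq (b := 1/2) (by norm_num)).mul_const
            (Real.sqrt (2*π))⁻¹
          refine h2.congr (Filter.Eventually.of_forall fun x => ?_)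
          show x * Real.exp (-(1/2) * x^2) * (Real.sqrt (2*π))⁻¹ = x * stdNormalPdf x
          rw [pdf_eq]; ring
        refine h1.abs.congr (Filter.Eventually.of_forall fun x => ?_)
        show |x * stdNormalPdf x| = |x| * stdNormalPdf x
        rw [abs_mul, abs_of_nonneg (pdf_nonneg x)]
      exact ((h0.const_mul _).restrict))
    (Filter.Eventually.of_forall fun x => fun a _ => by
      have h1 : HasDerivAt (fun a : ℝ => a * x) x a := by
        simpa using (hasDerivAt_id a).mul_const x
      have h2 := (cdf_hasDerivAt (a*x)).comp a h1
      have h3 : HasDerivAt (fun a => (2 * stdNormalCdf (a*x) - 1) * stdNormalPdf x) _ a :=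
        ((h2.const_mul 2).sub_const 1).mul_const (stdNormalPdf x)
      have e : 2 * x * stdNormalPdf (a*x) * stdNormalPdf x
          = 2 * (stdNormalPdf (a*x) * x) * stdNormalPdf x := by ring
      simp only [e]
      exact h3)
  have := key.2
  rwa [integral_deriv_aux l] at this

lemma Hfun_eq (l : ℝ) : Hfun l = Real.arctan l / π := by
  have hg : ∀ a : ℝ, HasDerivAt (fun a => Hfun a - Real.arctan a / π) 0 a := by
    intro a
    have h : HasDerivAt (fun a => Hfun a - Real.arctan a / π) _ a :=
      (Hfun_hasDerivAt a).sub ((Real.hasDerivAt_arctan a).div_const π)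
    convert h using 1
    have hπ : (0:ℝ) < π := pi_pos
    have h2 : (0:ℝ) < 1 + a^2 := by positivity
    rw [div_div]
    ring_nf
  have hconst := is_const_of_deriv_eq_zero
    (fun a => (hg a).differentiableAt) (fun a => (hg a).deriv) l 0
  have h0 : Hfun 0 = 0 := by
    unfold Hfun
    rw [show (fun x => (2 * stdNormalCdf ((0:ℝ)*x) - 1) * stdNormalPdf x) = fun _ => (0:ℝ) from
      funext fun x => by rw [zero_mul, cdf_zero]; ring]
    simp
  rw [Real.arctan_zero] at hconst
  rw [h0, zero_div, sub_zero, sub_eq_zero] at hconst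
  exact hconst

lemma contG (a : ℝ) : Continuous fun x => |2 * stdNormalCdf (a*x) - 1| * stdNormalPdf x :=
  ((continuous_const.mul (cdf_cont.comp (continuous_const.mul continuous_id))).sub
    continuous_const).abs.mul pdf_cont

lemma intG (a : ℝ) :
    Integrable (fun x => |2 * stdNormalCdf (a*x) - 1| * stdNormalPdf x) := by
  refine Integrable.mono pdf_integrable (contG a).aestronglyMeasurable
    (Filter.Eventually.of_forall fun x => ?_)
  rw [norm_mul, Real.norm_eq_abs, Real.norm_eq_abs, abs_abs, abs_of_nonneg (pdf_nonneg x)]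
  exact mul_le_of_le_one_left (pdf_nonneg x) (abs_two_cdf_sub_one_le _)

lemma G_eq_two_H {l : ℝ} (hl : 0 ≤ l) :
    ∫ x, |2 * stdNormalCdf (l*x) - 1| * stdNormalPdf x = 2 * Hfun l := by
  have hsplit := intervalIntegral.integral_Iic_add_Ioi (b := (0:ℝ)) (μ := volume)
    (f := fun x => |2 * stdNormalCdf (l*x) - 1| * stdNormalPdf x)
    (intG l).integrableOn (intG l).integrableOn
  have hneg : ∫ x in Iic (0:ℝ), |2 * stdNormalCdf (l*x) - 1| * stdNormalPdf x
      = ∫ x in Ioi (0:ℝ), |2 * stdNormalCdf (l*x) - 1| * stdNormalPdf x := by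
    have h1 := integral_comp_neg_Iic (0:ℝ)
      (fun x => |2 * stdNormalCdf (l*x) - 1| * stdNormalPdf x)
    rw [neg_zero] at h1
    rw [← h1]
    refine integral_congr_ae (Filter.Eventually.of_forall fun x => ?_)
    simp only
    rw [pdf_even, mul_neg, abs_two_cdf_neg]
  have hpos : ∫ x in Ioi (0:ℝ), |2 * stdNormalCdf (l*x) - 1| * stdNormalPdf x = Hfun l := by
    unfold Hfun
    refine setIntegral_congr_fun measurableSet_Ioi fun x hx => ?_
    have hx0 : (0:ℝ) ≤ l * x := mul_nonneg hl (le_of_lt hx)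
    have h12 : (1:ℝ)/2 ≤ stdNormalCdf (l*x) := by
      rw [← cdf_zero]; exact cdf_mono hx0
    rw [abs_of_nonneg (by linarith)]
  rw [← hsplit, hneg, hpos]
  ring

/-- For the skew-normal family the perturbation measure has the
closed form M_TV(λ) = arctan(λ)/π. -/
theorem skew_normal_MTV_closed_form (l : ℝ) :
    Real.sign l * ((1 / 2) * ∫ x, |2 * stdNormalCdf (l * x) - 1| * stdNormalPdf x)
      = Real.arctan l / Real.pi := by
  rcases lt_trichotomy l 0 with hl | hl | hl
  · have hflip : (fun x => |2 * stdNormalCdf (l * x) - 1| * stdNormalPdf x)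
        = fun x => |2 * stdNormalCdf ((-l) * x) - 1| * stdNormalPdf x := by
      funext x
      rw [show (-l) * x = -(l*x) by ring, abs_two_cdf_neg]
    rw [Real.sign_of_neg hl, hflip, G_eq_two_H (by linarith), Hfun_eq, Real.arctan_neg]
    field_simp
  · simp [hl, Real.sign_zero, Real.arctan_zero]
  · rw [Real.sign_of_pos hl, G_eq_two_H (le_of_lt hl), Hfun_eq]
    field_simp
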